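/- arXiv:2510.19721 — 6 statements merged into one kernel-verified Lean document; each statement's English description precedes it below -/
import Mathlib

section
/- A state U = (ρ, m, B, E) ∈ ℝ⁸ with ρ > 0 satisfies E − |m|²/(2ρ) − |B|²/2 > 0 if and only if for every v* ∈ ℝ³ and B* ∈ ℝ³ one has U · n* + |B*|²/2 > 0, where n* = (|v*|²/2, −v*, −B*, 1). -/
open scoped BigOperators

/-- Geometric quasi-linearization (GQL) equivalence for ideal MHD:
for a state `U = (ρ, m, B, E)` with `ρ > 0`, the internal-energy positivity
`E − |m|²/(2ρ) − |B|²/2 > 0` holds iff `U · n* + |B*|²/2 > 0` for all `v*, B* ∈ ℝ³`,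
where `n* = (|v*|²/2, −v*, −B*, 1)`. -/
theorem gql_equivalence (ρ E : ℝ) (m B : Fin 3 → ℝ) (hρ : 0 < ρ) :
    (0 < E - (∑ i, m i ^ 2) / (2 * ρ) - (∑ i, B i ^ 2) / 2) ↔
    (∀ vs Bs : Fin 3 → ℝ,
      0 < ρ * ((∑ i, vs i ^ 2) / 2) - (∑ i, m i * vs i) - (∑ i, B i * Bs i) + E
        + (∑ i, Bs i ^ 2) / 2) := by
  simp only [Fin.sum_univ_three]
  constructor
  · intro h vs Bs
    have key : ρ * ((vs 0 ^ 2 + vs 1 ^ 2 + vs 2 ^ 2) / 2)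
        - (m 0 * vs 0 + m 1 * vs 1 + m 2 * vs 2)
        - (B 0 * Bs 0 + B 1 * Bs 1 + B 2 * Bs 2) + E
        + (Bs 0 ^ 2 + Bs 1 ^ 2 + Bs 2 ^ 2) / 2
        = (E - (m 0 ^ 2 + m 1 ^ 2 + m 2 ^ 2) / (2 * ρ)
            - (B 0 ^ 2 + B 1 ^ 2 + B 2 ^ 2) / 2)
          + ((ρ * vs 0 - m 0) ^ 2 + (ρ * vs 1 - m 1) ^ 2 + (ρ * vs 2 - m 2) ^ 2) / (2 * ρ)
          + ((Bs 0 - B 0) ^ 2 + (Bs 1 - B 1) ^ 2 + (Bs 2 - B 2) ^ 2) / 2 := by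
      field_simp
      ring
    rw [key]
    have h1 : 0 ≤ ((ρ * vs 0 - m 0) ^ 2 + (ρ * vs 1 - m 1) ^ 2 + (ρ * vs 2 - m 2) ^ 2) / (2 * ρ) := by
      positivity
    have h2 : 0 ≤ ((Bs 0 - B 0) ^ 2 + (Bs 1 - B 1) ^ 2 + (Bs 2 - B 2) ^ 2) / 2 := by positivity
    linarith
  · intro h
    have := h (fun i => m i / ρ) B
    have hρ' : ρ ≠ 0 := ne_of_gt hρ
    field_simp at this ⊢
    nlinarith [this, sq_nonneg ρ, mul_pos hρ hρ]
end

section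
/- The admissible set G of ideal MHD states is convex: if U₁ and U₂ both have positive density and positive internal energy E − |m|²/(2ρ) − |B|²/2 > 0, then so does any convex combination θU₁ + (1−θ)U₂ with θ ∈ [0,1]. -/
open scoped BigOperators

/-- Convexity of the admissible set `G` of ideal MHD states. -/
theorem admissible_set_convex (θ : ℝ) (hθ0 : 0 ≤ θ) (hθ1 : θ ≤ 1)
    (ρ₁ E₁ ρ₂ E₂ : ℝ) (m₁ B₁ m₂ B₂ : Fin 3 → ℝ)
    (hρ₁ : 0 < ρ₁) (hE₁ : 0 < E₁ - (∑ i, m₁ i ^ 2) / (2 * ρ₁) - (∑ i, B₁ i ^ 2) / 2)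
    (hρ₂ : 0 < ρ₂) (hE₂ : 0 < E₂ - (∑ i, m₂ i ^ 2) / (2 * ρ₂) - (∑ i, B₂ i ^ 2) / 2) :
    0 < θ * ρ₁ + (1 - θ) * ρ₂ ∧
    0 < (θ * E₁ + (1 - θ) * E₂)
        - (∑ i, (θ * m₁ i + (1 - θ) * m₂ i) ^ 2) / (2 * (θ * ρ₁ + (1 - θ) * ρ₂))
        - (∑ i, (θ * B₁ i + (1 - θ) * B₂ i) ^ 2) / 2 := by
  have hθ' : 0 ≤ 1 - θ := by linarith
  have hθθ : 0 ≤ θ * (1 - θ) := mul_nonneg hθ0 hθ'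
  have hρ : 0 < θ * ρ₁ + (1 - θ) * ρ₂ := by
    rcases eq_or_lt_of_le hθ0 with h | h
    · nlinarith
    · nlinarith [mul_pos h hρ₁, mul_nonneg hθ' hρ₂.le]
  refine ⟨hρ, ?_⟩
  -- momentum part
  have summed : (∑ i, (θ * m₁ i + (1 - θ) * m₂ i) ^ 2) * (ρ₁ * ρ₂)
      ≤ (θ * ρ₁ + (1 - θ) * ρ₂) *
        (θ * (∑ i, m₁ i ^ 2) * ρ₂ + (1 - θ) * (∑ i, m₂ i ^ 2) * ρ₁) := by
    simp only [Fin.sum_univ_three]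
    nlinarith [mul_nonneg hθθ (sq_nonneg (m₁ 0 * ρ₂ - m₂ 0 * ρ₁)),
      mul_nonneg hθθ (sq_nonneg (m₁ 1 * ρ₂ - m₂ 1 * ρ₁)),
      mul_nonneg hθθ (sq_nonneg (m₁ 2 * ρ₂ - m₂ 2 * ρ₁))]
  have key1 : (∑ i, (θ * m₁ i + (1 - θ) * m₂ i) ^ 2) / (2 * (θ * ρ₁ + (1 - θ) * ρ₂))
      ≤ θ * ((∑ i, m₁ i ^ 2) / (2 * ρ₁)) + (1 - θ) * ((∑ i, m₂ i ^ 2) / (2 * ρ₂)) := by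
    rw [mul_div_assoc', mul_div_assoc',
      div_add_div _ _ (by positivity : (0:ℝ) < 2 * ρ₁).ne' (by positivity : (0:ℝ) < 2 * ρ₂).ne',
      div_le_div_iff₀ (by positivity) (by positivity)]
    nlinarith [summed, mul_pos hρ₁ hρ₂, hρ]
  -- magnetic part
  have keyB : (∑ i, (θ * B₁ i + (1 - θ) * B₂ i) ^ 2)
      ≤ θ * (∑ i, B₁ i ^ 2) + (1 - θ) * (∑ i, B₂ i ^ 2) := by
    simp only [Fin.sum_univ_three]
    nlinarith [mul_nonneg hθθ (sq_nonneg (B₁ 0 - B₂ 0)),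
      mul_nonneg hθθ (sq_nonneg (B₁ 1 - B₂ 1)),
      mul_nonneg hθθ (sq_nonneg (B₁ 2 - B₂ 2))]
  -- combine
  have hsum : 0 < θ * (E₁ - (∑ i, m₁ i ^ 2) / (2 * ρ₁) - (∑ i, B₁ i ^ 2) / 2)
      + (1 - θ) * (E₂ - (∑ i, m₂ i ^ 2) / (2 * ρ₂) - (∑ i, B₂ i ^ 2) / 2) := by
    rcases eq_or_lt_of_le hθ0 with h | h
    · rw [← h]; norm_num; linarith
    · nlinarith [mul_pos h hE₁, mul_nonneg hθ' hE₂.le]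
  nlinarith [key1, keyB, hsum]
end

section
/- Given a cell average Ū with ρ̄ > 0 and 𝓔(Ū) > 0, and a candidate cell-center state Ũᶜ, the two-step Zhang–Shu scaling limiter producing Ǔᶜ = θ₂(Ũ̃ᶜ − Ū) + Ū, where Ũ̃ᶜ = θ₁(Ũᶜ − Ū) + Ū with θ₁ = min{1, (ρ̄ − ε₁)/(ρ̄ − ρ̃ᶜ)} (when ρ̃ᶜ < ε₁, else θ₁ = 1), ε₁ = min{10⁻¹³, ρ̄}, and θ₂ = min{1, (𝓔(Ū) − ε₂)/(𝓔(Ū) − 𝓔(Ũ̃ᶜ))} (when 𝓔(Ũ̃ᶜ) < ε₂, else θ₂ = 1), ε₂ = min{10⁻¹³, 𝓔(Ū)}, satisfies ρ̌ᶜ ≥ ε₁ > 0 and 𝓔(Ǔᶜ) ≥ ε₂ > 0; in particular Ǔᶜ lies in the admissible set G. -/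
open scoped BigOperators

noncomputable section

/-- An ideal MHD state `U = (ρ, m, B, E)`. -/
structure MHDState where
  ρ : ℝ
  m : Fin 3 → ℝ
  B : Fin 3 → ℝ
  E : ℝ

/-- Internal energy `𝓔(U) = E − |m|²/(2ρ) − |B|²/2`. -/
def MHDState.ie (U : MHDState) : ℝ :=
  U.E - (∑ i, U.m i ^ 2) / (2 * U.ρ) - (∑ i, U.B i ^ 2) / 2

/-- The scaling-limiter blend `θ (U − Ū) + Ū`. -/
def blend (θ : ℝ) (U Ub : MHDState) : MHDState :=
  ⟨θ * (U.ρ - Ub.ρ) + Ub.ρ,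
   fun i => θ * (U.m i - Ub.m i) + Ub.m i,
   fun i => θ * (U.B i - Ub.B i) + Ub.B i,
   θ * (U.E - Ub.E) + Ub.E⟩

lemma convex_pos (θ a b : ℝ) (hθ0 : 0 ≤ θ) (hθ1 : θ ≤ 1) (ha : 0 < a) (hb : 0 < b) :
    0 < θ * (a - b) + b := by
  rcases lt_or_ge θ 1 with h | h
  · nlinarith [mul_nonneg hθ0 ha.le, mul_pos (sub_pos.2 h) hb]
  · have hθ : θ = 1 := le_antisymm hθ1 h
    rw [hθ]; linarith

lemma quad_div_comp (θ ρ₁ ρ₂ a b : ℝ) (hθ0 : 0 ≤ θ) (hθ1 : θ ≤ 1)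
    (h1 : 0 < ρ₁) (h2 : 0 < ρ₂) :
    (θ * (a - b) + b) ^ 2 / (2 * (θ * (ρ₁ - ρ₂) + ρ₂)) ≤
      θ * (a ^ 2 / (2 * ρ₁)) + (1 - θ) * (b ^ 2 / (2 * ρ₂)) := by
  have hρθ : 0 < θ * (ρ₁ - ρ₂) + ρ₂ := convex_pos θ ρ₁ ρ₂ hθ0 hθ1 h1 h2
  rw [← sub_nonneg]
  have heq : θ * (a ^ 2 / (2 * ρ₁)) + (1 - θ) * (b ^ 2 / (2 * ρ₂)) -
      (θ * (a - b) + b) ^ 2 / (2 * (θ * (ρ₁ - ρ₂) + ρ₂)) =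
      θ * (1 - θ) * (a * ρ₂ - b * ρ₁) ^ 2 / (2 * ρ₁ * ρ₂ * (θ * (ρ₁ - ρ₂) + ρ₂)) := by
    field_simp
    ring
  rw [heq]
  apply div_nonneg
  · exact mul_nonneg (mul_nonneg hθ0 (by linarith)) (sq_nonneg _)
  · positivity

lemma ie_blend_ge (θ : ℝ) (U V : MHDState) (hθ0 : 0 ≤ θ) (hθ1 : θ ≤ 1)
    (hU : 0 < U.ρ) (hV : 0 < V.ρ) :
    θ * U.ie + (1 - θ) * V.ie ≤ (blend θ U V).ie := by
  have hm0 := quad_div_comp θ U.ρ V.ρ (U.m 0) (V.m 0) hθ0 hθ1 hU hV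
  have hm1 := quad_div_comp θ U.ρ V.ρ (U.m 1) (V.m 1) hθ0 hθ1 hU hV
  have hm2 := quad_div_comp θ U.ρ V.ρ (U.m 2) (V.m 2) hθ0 hθ1 hU hV
  have hb : ∀ x y : ℝ, (θ * (x - y) + y) ^ 2 ≤ θ * x ^ 2 + (1 - θ) * y ^ 2 := by
    intro x y
    nlinarith [sq_nonneg (x - y), mul_nonneg hθ0 (sub_nonneg.2 hθ1)]
  have hb0 := hb (U.B 0) (V.B 0)
  have hb1 := hb (U.B 1) (V.B 1)
  have hb2 := hb (U.B 2) (V.B 2)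
  simp only [MHDState.ie, blend, Fin.sum_univ_three]
  have hρθ : 0 < θ * (U.ρ - V.ρ) + V.ρ := convex_pos θ U.ρ V.ρ hθ0 hθ1 hU hV
  have hsplit : ∀ x y z d : ℝ, (x + y + z) / d = x / d + y / d + z / d := by
    intro x y z d; ring
  simp only [hsplit]
  linarith [hm0, hm1, hm2, hb0, hb1, hb2]

/-- The two-step Zhang–Shu scaling limiter produces a cell-center state with
density `≥ ε₁ > 0` and internal energy `≥ ε₂ > 0`; in particular it is admissible. -/
theorem zhang_shu_limiter_admissible (Ub Uc : MHDState)
    (hρ : 0 < Ub.ρ) (hE : 0 < Ub.ie) :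
    let ε₁ : ℝ := min (10 ^ (-(13 : ℤ))) Ub.ρ
    let θ₁ : ℝ := if Uc.ρ < ε₁ then min 1 ((Ub.ρ - ε₁) / (Ub.ρ - Uc.ρ)) else 1
    let Ucc : MHDState := blend θ₁ Uc Ub
    let ε₂ : ℝ := min (10 ^ (-(13 : ℤ))) Ub.ie
    let θ₂ : ℝ := if Ucc.ie < ε₂ then min 1 ((Ub.ie - ε₂) / (Ub.ie - Ucc.ie)) else 1
    let Uch : MHDState := blend θ₂ Ucc Ub
    Uch.ρ ≥ ε₁ ∧ 0 < ε₁ ∧ Uch.ie ≥ ε₂ ∧ 0 < ε₂ ∧ 0 < Uch.ρ ∧ 0 < Uch.ie := by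
  intro ε₁ θ₁ Ucc ε₂ θ₂ Uch
  have hε₁pos : 0 < ε₁ := lt_min (by norm_num) hρ
  have hε₁le : ε₁ ≤ Ub.ρ := min_le_right _ _
  have hε₂pos : 0 < ε₂ := lt_min (by norm_num) hE
  have hε₂le : ε₂ ≤ Ub.ie := min_le_right _ _
  -- θ₁ bounds
  have hθ₁0 : 0 ≤ θ₁ := by
    show (0:ℝ) ≤ if Uc.ρ < ε₁ then min 1 ((Ub.ρ - ε₁) / (Ub.ρ - Uc.ρ)) else 1
    split_ifs with h
    · exact le_min (by norm_num) (div_nonneg (by linarith) (by linarith))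
    · norm_num
  have hθ₁1 : θ₁ ≤ 1 := by
    show (if Uc.ρ < ε₁ then min 1 ((Ub.ρ - ε₁) / (Ub.ρ - Uc.ρ)) else 1) ≤ 1
    split_ifs with h
    · exact min_le_left _ _
    · exact le_refl 1
  -- density of Ucc
  have hUccρ : Ucc.ρ ≥ ε₁ := by
    show θ₁ * (Uc.ρ - Ub.ρ) + Ub.ρ ≥ ε₁
    by_cases h : Uc.ρ < ε₁
    · have hden : 0 < Ub.ρ - Uc.ρ := by linarith
      have hlt : (Ub.ρ - ε₁) / (Ub.ρ - Uc.ρ) ≤ 1 := by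
        rw [div_le_one hden]; linarith
      have hθ₁eq : θ₁ = (Ub.ρ - ε₁) / (Ub.ρ - Uc.ρ) := by
        show (if Uc.ρ < ε₁ then min 1 ((Ub.ρ - ε₁) / (Ub.ρ - Uc.ρ)) else 1) = _
        rw [if_pos h, min_eq_right hlt]
      rw [hθ₁eq]
      have : (Ub.ρ - ε₁) / (Ub.ρ - Uc.ρ) * (Uc.ρ - Ub.ρ) = -(Ub.ρ - ε₁) := by
        field_simp
        ring
      rw [this]; linarith
    · have hθ₁eq : θ₁ = 1 := by
        show (if Uc.ρ < ε₁ then min 1 ((Ub.ρ - ε₁) / (Ub.ρ - Uc.ρ)) else 1) = 1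
        rw [if_neg h]
      rw [hθ₁eq]; push_neg at h; linarith
  have hUccρpos : 0 < Ucc.ρ := lt_of_lt_of_le hε₁pos hUccρ
  -- θ₂ bounds
  have hθ₂0 : 0 ≤ θ₂ := by
    show (0:ℝ) ≤ if Ucc.ie < ε₂ then min 1 ((Ub.ie - ε₂) / (Ub.ie - Ucc.ie)) else 1
    split_ifs with h
    · exact le_min (by norm_num) (div_nonneg (by linarith) (by linarith))
    · norm_num
  have hθ₂1 : θ₂ ≤ 1 := by
    show (if Ucc.ie < ε₂ then min 1 ((Ub.ie - ε₂) / (Ub.ie - Ucc.ie)) else 1) ≤ 1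
    split_ifs with h
    · exact min_le_left _ _
    · exact le_refl 1
  -- density of Uch
  have hUchρ : Uch.ρ ≥ ε₁ := by
    show θ₂ * (Ucc.ρ - Ub.ρ) + Ub.ρ ≥ ε₁
    nlinarith [hUccρ, hε₁le, hθ₂0, hθ₂1]
  -- internal energy of Uch
  have hUchie : Uch.ie ≥ ε₂ := by
    by_cases h : Ucc.ie < ε₂
    · have hden : 0 < Ub.ie - Ucc.ie := by linarith
      have hlt : (Ub.ie - ε₂) / (Ub.ie - Ucc.ie) ≤ 1 := by
        rw [div_le_one hden]; linarith
      have hθ₂eq : θ₂ = (Ub.ie - ε₂) / (Ub.ie - Ucc.ie) := by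
        show (if Ucc.ie < ε₂ then min 1 ((Ub.ie - ε₂) / (Ub.ie - Ucc.ie)) else 1) = _
        rw [if_pos h, min_eq_right hlt]
      have hcv := ie_blend_ge θ₂ Ucc Ub hθ₂0 hθ₂1 hUccρpos hρ
      have hval : θ₂ * Ucc.ie + (1 - θ₂) * Ub.ie = ε₂ := by
        rw [hθ₂eq]
        field_simp
        ring
      show (blend θ₂ Ucc Ub).ie ≥ ε₂
      linarith [hcv, hval.ge, hval.le]
    · have hθ₂eq : θ₂ = 1 := by
        show (if Ucc.ie < ε₂ then min 1 ((Ub.ie - ε₂) / (Ub.ie - Ucc.ie)) else 1) = 1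
        rw [if_neg h]
      push_neg at h
      have : Uch.ie = Ucc.ie := by
        show (blend θ₂ Ucc Ub).ie = Ucc.ie
        rw [hθ₂eq]
        simp only [blend, MHDState.ie]
        ring_nf
      rw [this]; exact h
  exact ⟨hUchρ, hε₁pos, hUchie, hε₂pos, lt_of_lt_of_le hε₁pos hUchρ, lt_of_lt_of_le hε₂pos hUchie⟩

end
end

section
/- For any admissible MHD state U = (ρ, m, B, E) with ρ > 0 and internal energy 𝓔(U) > 0, any real ξ, and any v*, B* ∈ ℝ³, the Godunov–Powell source vector S(U) = (0, B, v, v·B) satisfies −ξ(S(U)·n*) ≥ ξ(v*·B*) − (|ξ|/√ρ)(U·n* + |B*|²/2), where n* = (|v*|²/2, −v*, −B*, 1) and v = m/ρ. -/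
open scoped BigOperators

/-- Key inequality for the Godunov–Powell source term `S(U) = (0, B, v, v·B)`:
for any admissible state, real `ξ`, and `v*, B* ∈ ℝ³`,
`−ξ (S(U)·n*) ≥ ξ (v*·B*) − (|ξ|/√ρ)(U·n* + |B*|²/2)`. -/
theorem godunov_powell_source_inequality (ρ E ξ : ℝ) (m B vs Bs : Fin 3 → ℝ)
    (hρ : 0 < ρ)
    (hE : 0 < E - (∑ i, m i ^ 2) / (2 * ρ) - (∑ i, B i ^ 2) / 2) :
    -ξ * (-(∑ i, B i * vs i) - (∑ i, (m i / ρ) * Bs i) + (∑ i, (m i / ρ) * B i))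
      ≥ ξ * (∑ i, vs i * Bs i)
        - (|ξ| / Real.sqrt ρ) *
          ((ρ * ((∑ i, vs i ^ 2) / 2) - (∑ i, m i * vs i) - (∑ i, B i * Bs i) + E)
            + (∑ i, Bs i ^ 2) / 2) := by
  have hρ' : ρ ≠ 0 := ne_of_gt hρ
  set A := ∑ i, (m i / ρ - vs i) ^ 2 with hA
  set Bq := ∑ i, (B i - Bs i) ^ 2 with hBq
  set c := ∑ i, (m i / ρ - vs i) * (B i - Bs i) with hc
  have hAnn : 0 ≤ A := Finset.sum_nonneg fun i _ => sq_nonneg _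
  have hBnn : 0 ≤ Bq := Finset.sum_nonneg fun i _ => sq_nonneg _
  set 𝓔 := E - (∑ i, m i ^ 2) / (2 * ρ) - (∑ i, B i ^ 2) / 2 with h𝓔
  -- identity for the source term
  have hid1 : -(∑ i, B i * vs i) - (∑ i, (m i / ρ) * Bs i) + (∑ i, (m i / ρ) * B i)
      = c - ∑ i, vs i * Bs i := by
    simp only [hc, Fin.sum_univ_three]
    field_simp
    ring
  -- identity for the quadratic form
  have hid2 : (ρ * ((∑ i, vs i ^ 2) / 2) - (∑ i, m i * vs i) - (∑ i, B i * Bs i) + E)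
      + (∑ i, Bs i ^ 2) / 2 = ρ * A / 2 + Bq / 2 + 𝓔 := by
    simp only [hA, hBq, h𝓔, Fin.sum_univ_three]
    field_simp
    ring
  -- Cauchy–Schwarz
  have hcs : c ^ 2 ≤ A * Bq := by
    simpa using Finset.sum_mul_sq_le_sq_mul_sq Finset.univ
      (fun i => m i / ρ - vs i) (fun i => B i - Bs i)
  have hsA := Real.sq_sqrt hAnn
  have hsB := Real.sq_sqrt hBnn
  have hsρ := Real.sq_sqrt hρ.le
  have hsρpos : 0 < Real.sqrt ρ := Real.sqrt_pos.mpr hρ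
  have habs : |c| ≤ Real.sqrt A * Real.sqrt Bq := by
    have h1 : |c| = Real.sqrt (c ^ 2) := (Real.sqrt_sq_eq_abs c).symm
    rw [h1, ← Real.sqrt_mul hAnn]
    exact Real.sqrt_le_sqrt hcs
  -- AM-GM step: √ρ √A √Bq ≤ (ρA + Bq)/2
  have hamgm : Real.sqrt ρ * (Real.sqrt A * Real.sqrt Bq) ≤ (ρ * A + Bq) / 2 := by
    nlinarith [sq_nonneg (Real.sqrt ρ * Real.sqrt A - Real.sqrt Bq),
      Real.sqrt_nonneg ρ, Real.sqrt_nonneg A, Real.sqrt_nonneg Bq]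
  -- main: ξ c ≤ (|ξ|/√ρ) (ρA/2 + Bq/2 + 𝓔)
  have hmain : ξ * c ≤ (|ξ| / Real.sqrt ρ) * (ρ * A / 2 + Bq / 2 + 𝓔) := by
    have h1 : ξ * c ≤ |ξ| * |c| := by
      calc ξ * c ≤ |ξ * c| := le_abs_self _
        _ = |ξ| * |c| := abs_mul _ _
    have h2 : |ξ| * |c| ≤ |ξ| * (Real.sqrt A * Real.sqrt Bq) :=
      mul_le_mul_of_nonneg_left habs (abs_nonneg _)
    have h3 : |ξ| * (Real.sqrt A * Real.sqrt Bq)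
        ≤ (|ξ| / Real.sqrt ρ) * ((ρ * A + Bq) / 2) := by
      rw [div_mul_eq_mul_div, le_div_iff₀ hsρpos]
      nlinarith [mul_le_mul_of_nonneg_left hamgm (abs_nonneg ξ)]
    have h4 : 0 ≤ (|ξ| / Real.sqrt ρ) * 𝓔 :=
      mul_nonneg (div_nonneg (abs_nonneg _) hsρpos.le) (le_of_lt hE)
    have heq : (|ξ| / Real.sqrt ρ) * (ρ * A / 2 + Bq / 2 + 𝓔)
        = (|ξ| / Real.sqrt ρ) * ((ρ * A + Bq) / 2) + (|ξ| / Real.sqrt ρ) * 𝓔 := by ring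
    linarith
  rw [hid1, hid2]
  have hre : -ξ * (c - ∑ i, vs i * Bs i) = ξ * (∑ i, vs i * Bs i) - ξ * c := by ring
  rw [hre]
  linarith [hmain]
end

section
/- The DDF projection is exact: given arbitrary magnetic-field point values on the interfaces of a rectangular cell with mesh sizes Δx, Δy, the modified values B̃₁ = B₁ ∓ A₁ (on right/left edges respectively) and B̃₂ = B₂ ∓ A₂ (on top/bottom edges respectively), with A₁ = Δx·(∇·B)_{ij}/(2(1 + (Δx/Δy)²)) and A₂ = Δy·(∇·B)_{ij}/(2(1 + (Δy/Δx)²)), satisfy the discrete divergence-free condition: the Simpson-weighted discrete divergence of B̃ over the cell vanishes. -/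
noncomputable section

/-- Simpson-weighted edge average of three point values. -/
def simpson (f : Fin 3 → ℝ) : ℝ := (f 0 + 4 * f 1 + f 2) / 6

/-- Exactness of the DDF projection: subtracting `A₁` from the `B₁` values on the
right edge and adding `A₁` on the left edge (and analogously `A₂` for `B₂` on the
top/bottom edges), with
`A₁ = Δx (∇·B)ᵢⱼ / (2(1 + (Δx/Δy)²))` and `A₂ = Δy (∇·B)ᵢⱼ / (2(1 + (Δy/Δx)²))`,
makes the Simpson-weighted discrete divergence vanish exactly. -/
theorem ddf_projection_exact (Δx Δy : ℝ) (hx : 0 < Δx) (hy : 0 < Δy)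
    (B1R B1L B2T B2B : Fin 3 → ℝ) :
    let divB : ℝ := (simpson B1R - simpson B1L) / Δx + (simpson B2T - simpson B2B) / Δy
    let A1 : ℝ := Δx * divB / (2 * (1 + (Δx / Δy) ^ 2))
    let A2 : ℝ := Δy * divB / (2 * (1 + (Δy / Δx) ^ 2))
    (simpson (fun k => B1R k - A1) - simpson (fun k => B1L k + A1)) / Δx
      + (simpson (fun k => B2T k - A2) - simpson (fun k => B2B k + A2)) / Δy = 0 := by
  have hx' := hx.ne'
  have hy' := hy.ne'
  have h1 : (0:ℝ) < 1 + (Δx / Δy) ^ 2 := by positivity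
  have h2 : (0:ℝ) < 1 + (Δy / Δx) ^ 2 := by positivity
  simp only [simpson]
  field_simp
  ring
end
end

section
/- If θ ∈ [0,1] and Ū and Ǔ both lie in the admissible set G = {ρ > 0, E − |m|²/(2ρ) − |B|²/2 > 0}, then the COE-modified state Û = θ(Ǔ − Ū) + Ū also lies in G; moreover, if a family of magnetic-field point values satisfies a linear discrete divergence-free constraint ∇_{ij}·B̌ = 0 and all values are modified by Û = θ(Ǔ − Ū) + Ū with the same θ and the same cell average, then the modified fields satisfy ∇_{ij}·B̂ = θ·∇_{ij}·B̌ + (1−θ)·∇_{ij}·B̄ where B̄ is a constant field, so ∇_{ij}·B̂ = 0. -/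
open scoped BigOperators

lemma coe_pos_combo (θ ρ1 ρ2 : ℝ) (hθ0 : 0 ≤ θ) (hθ1 : θ ≤ 1)
    (hρ1 : 0 < ρ1) (hρ2 : 0 < ρ2) : 0 < θ * (ρ1 - ρ2) + ρ2 := by
  rcases eq_or_lt_of_le hθ1 with h | h
  · rw [h]; linarith
  · have h1 := mul_pos (by linarith : (0:ℝ) < 1 - θ) hρ2
    have h2 := mul_nonneg hθ0 hρ1.le
    nlinarith

lemma coe_div_key (θ a b ρ1 ρ2 : ℝ) (hθ0 : 0 ≤ θ) (hθ1 : θ ≤ 1)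
    (hρ1 : 0 < ρ1) (hρ2 : 0 < ρ2) :
    (θ * (a - b) + b) ^ 2 / (θ * (ρ1 - ρ2) + ρ2)
      ≤ θ * (a ^ 2 / ρ1) + (1 - θ) * (b ^ 2 / ρ2) := by
  have hρ : 0 < θ * (ρ1 - ρ2) + ρ2 := coe_pos_combo θ ρ1 ρ2 hθ0 hθ1 hρ1 hρ2
  have hrw : θ * (a ^ 2 / ρ1) + (1 - θ) * (b ^ 2 / ρ2)
      = (θ * a ^ 2 * ρ2 + (1 - θ) * b ^ 2 * ρ1) / (ρ1 * ρ2) := by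
    field_simp
  have poly : (θ * (a - b) + b) ^ 2 * (ρ1 * ρ2)
      ≤ (θ * a ^ 2 * ρ2 + (1 - θ) * b ^ 2 * ρ1) * (θ * (ρ1 - ρ2) + ρ2) := by
    nlinarith [mul_nonneg (mul_nonneg hθ0 (by linarith : (0:ℝ) ≤ 1 - θ))
      (sq_nonneg (a * ρ2 - b * ρ1))]
  rw [hrw, div_le_div_iff₀ hρ (mul_pos hρ1 hρ2)]
  linarith

/-- The COE modification `Û = θ(Ǔ − Ū) + Ū`, `θ ∈ [0,1]`, preserves admissibility
(by convexity of `G`); moreover, any linear discrete-divergence functional that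
vanishes on constant fields also vanishes on the modified magnetic-field values. -/
theorem coe_preserves_admissibility_and_ddf (θ : ℝ) (hθ0 : 0 ≤ θ) (hθ1 : θ ≤ 1)
    (ρb Eb ρc Ec : ℝ) (mb Bb mc Bc : Fin 3 → ℝ)
    (hρb : 0 < ρb) (hEb : 0 < Eb - (∑ i, mb i ^ 2) / (2 * ρb) - (∑ i, Bb i ^ 2) / 2)
    (hρc : 0 < ρc) (hEc : 0 < Ec - (∑ i, mc i ^ 2) / (2 * ρc) - (∑ i, Bc i ^ 2) / 2)
    (ι : Type*) (D : (ι → ℝ) →ₗ[ℝ] ℝ) (hDconst : ∀ c : ℝ, D (fun _ => c) = 0)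
    (b : ι → ℝ) (c : ℝ) (hDb : D b = 0) :
    (0 < θ * (ρc - ρb) + ρb ∧
      0 < (θ * (Ec - Eb) + Eb)
          - (∑ i, (θ * (mc i - mb i) + mb i) ^ 2) / (2 * (θ * (ρc - ρb) + ρb))
          - (∑ i, (θ * (Bc i - Bb i) + Bb i) ^ 2) / 2) ∧
    D (fun k => θ * (b k - c) + c) = 0 := by
  have hρ : 0 < θ * (ρc - ρb) + ρb := coe_pos_combo θ ρc ρb hθ0 hθ1 hρc hρb
  refine ⟨⟨hρ, ?_⟩, ?_⟩
  · -- admissibility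
    have hm : (∑ i, (θ * (mc i - mb i) + mb i) ^ 2) / (θ * (ρc - ρb) + ρb)
        ≤ θ * ((∑ i, mc i ^ 2) / ρc) + (1 - θ) * ((∑ i, mb i ^ 2) / ρb) := by
      calc (∑ i, (θ * (mc i - mb i) + mb i) ^ 2) / (θ * (ρc - ρb) + ρb)
          = ∑ i, (θ * (mc i - mb i) + mb i) ^ 2 / (θ * (ρc - ρb) + ρb) :=
            Finset.sum_div _ _ _
        _ ≤ ∑ i, (θ * (mc i ^ 2 / ρc) + (1 - θ) * (mb i ^ 2 / ρb)) :=
            Finset.sum_le_sum fun i _ =>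
              coe_div_key θ (mc i) (mb i) ρc ρb hθ0 hθ1 hρc hρb
        _ = θ * ((∑ i, mc i ^ 2) / ρc) + (1 - θ) * ((∑ i, mb i ^ 2) / ρb) := by
            rw [Finset.sum_add_distrib, ← Finset.mul_sum, ← Finset.mul_sum,
              ← Finset.sum_div, ← Finset.sum_div]
    have hB : (∑ i, (θ * (Bc i - Bb i) + Bb i) ^ 2)
        ≤ θ * (∑ i, Bc i ^ 2) + (1 - θ) * (∑ i, Bb i ^ 2) := by
      rw [Finset.mul_sum, Finset.mul_sum, ← Finset.sum_add_distrib]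
      refine Finset.sum_le_sum fun i _ => ?_
      nlinarith [mul_nonneg (mul_nonneg hθ0 (by linarith : (0:ℝ) ≤ 1 - θ))
        (sq_nonneg (Bc i - Bb i))]
    have e1 : (∑ i, (θ * (mc i - mb i) + mb i) ^ 2) / (2 * (θ * (ρc - ρb) + ρb))
        = ((∑ i, (θ * (mc i - mb i) + mb i) ^ 2) / (θ * (ρc - ρb) + ρb)) / 2 := by
      rw [div_div, mul_comm]
    have e2 : (∑ i, mc i ^ 2) / (2 * ρc) = ((∑ i, mc i ^ 2) / ρc) / 2 := by
      rw [div_div, mul_comm]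
    have e3 : (∑ i, mb i ^ 2) / (2 * ρb) = ((∑ i, mb i ^ 2) / ρb) / 2 := by
      rw [div_div, mul_comm]
    rw [e1]
    rw [e2] at hEc
    rw [e3] at hEb
    have A := mul_nonneg hθ0 hEc.le
    have B' := mul_nonneg (by linarith : (0:ℝ) ≤ 1 - θ) hEb.le
    nlinarith [A, B', hm, hB, hEb, hEc]
  · -- divergence part
    have heq : (fun k => θ * (b k - c) + c) = θ • b + (fun _ : ι => (1 - θ) * c) := by
      funext k
      simp only [Pi.add_apply, Pi.smul_apply, smul_eq_mul]
      ring
    rw [heq, map_add, map_smul, hDb, hDconst]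
    simp
end
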